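/- Let λ > 0 and d > 0. The function y ↦ h_{d,λ}(t;y) := (t−y)_+^d e^{−λ(t−y)_+} − (−y)_+^d e^{−λ(−y)_+} + λ ∫_0^t (s−y)_+^d e^{−λ(s−y)_+} ds belongs to L²(ℝ) for every fixed t ∈ ℝ. -/

import Mathlib

open Real MeasureTheory Set

/-- The TFBMII kernel `h_{d,λ}(t;·)`. Here `(x)_+ = max x 0`. -/
noncomputable def hKernel (d lam t : ℝ) (y : ℝ) : ℝ :=
  (max (t - y) 0) ^ d * Real.exp (-lam * max (t - y) 0)
    - (max (-y) 0) ^ d * Real.exp (-lam * max (-y) 0)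
    + lam * ∫ s in (0:ℝ)..t, (max (s - y) 0) ^ d * Real.exp (-lam * max (s - y) 0)

section aux

variable {d lam : ℝ}

/-- Continuity of `x ↦ (max x 0)^p * exp (-c * max x 0)`. -/
lemma phi_continuous (p c : ℝ) (hp : 0 < p) :
    Continuous (fun x : ℝ => (max x 0) ^ p * Real.exp (-c * max x 0)) := by
  have h1 : Continuous fun z : ℝ => z ^ p :=
    continuous_iff_continuousAt.2 fun x => Real.continuousAt_rpow_const x p (Or.inr hp.le)
  have h2 : Continuous fun x : ℝ => max x 0 := continuous_id.max continuous_const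
  exact (h1.comp h2).mul (Real.continuous_exp.comp (continuous_const.mul h2))

/-- Integrability of `x ↦ (max x 0)^p * exp (-c * max x 0)` on `ℝ`. -/
lemma phi_integrable {p c : ℝ} (hp : 0 < p) (hc : 0 < c) :
    Integrable (fun x : ℝ => (max x 0) ^ p * Real.exp (-c * max x 0)) := by
  rw [← integrableOn_univ, ← Set.Iic_union_Ioi (a := (0:ℝ)), integrableOn_union]
  constructor
  · refine (integrableOn_congr_fun (g := fun _ => (0:ℝ)) ?_ measurableSet_Iic).2
      integrableOn_zero
    intro x hx
    have : max x 0 = 0 := max_eq_right (mem_Iic.mp hx)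
    simp [this, Real.zero_rpow hp.ne']
  · have hbase : IntegrableOn (fun x : ℝ => x ^ p * Real.exp (-c * x ^ (1:ℝ))) (Ioi 0) :=
      integrableOn_rpow_mul_exp_neg_mul_rpow (by linarith) one_pos hc
    refine (integrableOn_congr_fun ?_ measurableSet_Ioi).2 hbase
    intro x hx
    have hx0 : (0:ℝ) < x := mem_Ioi.mp hx
    simp only [max_eq_left hx0.le, Real.rpow_one]

/-- Squaring identity. -/
lemma sq_phi {a b : ℝ} (ha : 0 ≤ a) (hd : 0 < d) :
    (a ^ d * Real.exp b) ^ 2 = a ^ (2 * d) * Real.exp (2 * b) := by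
  have h1 : a ^ (2 * d) = a ^ d * a ^ d := by
    rw [show (2:ℝ) * d = d + d by ring, Real.rpow_add' ha (by positivity)]
  have h2 : Real.exp (2 * b) = Real.exp b * Real.exp b := by
    rw [show (2:ℝ) * b = b + b by ring, Real.exp_add]
  rw [h1, h2]; ring

/-- The single-bump term is in L². -/
lemma memLp_single (hd : 0 < d) (hlam : 0 < lam) (u : ℝ) :
    MemLp (fun y : ℝ => (max (u - y) 0) ^ d * Real.exp (-lam * max (u - y) 0)) 2
      (volume : Measure ℝ) := by
  have hcont : Continuous (fun y : ℝ =>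
      (max (u - y) 0) ^ d * Real.exp (-lam * max (u - y) 0)) :=
    (phi_continuous d lam hd).comp (continuous_const.sub continuous_id)
  rw [memLp_two_iff_integrable_sq hcont.aestronglyMeasurable]
  have hint : Integrable (fun x : ℝ => (max x 0) ^ (2 * d) *
      Real.exp (-(2 * lam) * max x 0)) := phi_integrable (by linarith) (by linarith)
  have := hint.comp_sub_left u
  refine this.congr (Filter.Eventually.of_forall fun y => ?_)
  dsimp only
  rw [sq_phi (le_max_right _ _) hd]
  congr 2
  ring

end aux

/-- For `λ > 0` and `d > 0`, the kernel `y ↦ h_{d,λ}(t;y)` is square integrable on `ℝ`. -/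
theorem stmt5 (d lam : ℝ) (hd : 0 < d) (hlam : 0 < lam) (t : ℝ) :
    MemLp (hKernel d lam t) 2 (volume : Measure ℝ) := by
  -- the three pieces
  have h1 := memLp_single hd hlam t
  have h2 : MemLp (fun y : ℝ => (max (-y) 0) ^ d * Real.exp (-lam * max (-y) 0)) 2
      (volume : Measure ℝ) := by
    have := memLp_single hd hlam 0
    simpa using this
  set M : ℝ := max t 0 with hM
  set m : ℝ := min t 0 with hm
  have hmM : m ≤ M := le_trans (min_le_right _ _) (le_max_right _ _)
  -- the integral term
  set I : ℝ → ℝ := fun y => ∫ s in (0:ℝ)..t,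
    (max (s - y) 0) ^ d * Real.exp (-lam * max (s - y) 0) with hIdef
  have hcontI : Continuous I := by
    apply intervalIntegral.continuous_parametric_intervalIntegral_of_continuous'
      (f := fun y s => (max (s - y) 0) ^ d * Real.exp (-lam * max (s - y) 0))
    exact (phi_continuous d lam hd).comp
      ((continuous_snd.sub continuous_fst) : Continuous fun p : ℝ × ℝ => p.2 - p.1)
  -- pointwise bound on |I y|
  set C : ℝ → ℝ := fun y => (max (M - y) 0) ^ d * Real.exp (-lam * max (m - y) 0) with hCdef
  have hCnonneg : ∀ y, 0 ≤ C y := by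
    intro y
    exact mul_nonneg (Real.rpow_nonneg (le_max_right _ _) d) (Real.exp_pos _).le
  have hbound : ∀ y, |I y| ≤ C y * |t| := by
    intro y
    have h : ‖I y‖ ≤ C y * |t - 0| := by
      apply intervalIntegral.norm_integral_le_of_norm_le_const
      intro s hs
      have hsm : m ≤ s := by
        have h' := hs.1
        rw [min_comm] at h'
        exact h'.le
      have hsM : s ≤ M := by
        have h' := hs.2
        rwa [max_comm] at h'
      have hA : max (s - y) 0 ≤ max (M - y) 0 := max_le_max (by linarith) le_rfl
      have hB : max (m - y) 0 ≤ max (s - y) 0 := max_le_max (by linarith) le_rfl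
      have hterm1 : (max (s - y) 0) ^ d ≤ (max (M - y) 0) ^ d :=
        Real.rpow_le_rpow (le_max_right _ _) hA hd.le
      have hterm2 : Real.exp (-lam * max (s - y) 0) ≤ Real.exp (-lam * max (m - y) 0) := by
        apply Real.exp_le_exp.2
        nlinarith
      have hnn : (0:ℝ) ≤ (max (s - y) 0) ^ d * Real.exp (-lam * max (s - y) 0) :=
        mul_nonneg (Real.rpow_nonneg (le_max_right _ _) d) (Real.exp_pos _).le
      rw [Real.norm_eq_abs, abs_of_nonneg hnn]
      exact mul_le_mul hterm1 hterm2 (Real.exp_pos _).le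
        (Real.rpow_nonneg (le_max_right _ _) d)
    simpa using h
  -- the majorant is integrable
  have hmaj : Integrable (fun y : ℝ => (Real.exp (2 * lam * (M - m)) * t ^ 2) *
      ((max (M - y) 0) ^ (2 * d) * Real.exp (-(2 * lam) * max (M - y) 0))) := by
    exact ((phi_integrable (p := 2 * d) (c := 2 * lam) (by linarith) (by linarith)).comp_sub_left
      M).const_mul _
  -- I² is integrable
  have hIsq : Integrable (fun y : ℝ => I y ^ 2) := by
    refine hmaj.mono' (hcontI.pow 2).aestronglyMeasurable
      (Filter.Eventually.of_forall fun y => ?_)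
    have h1' : |I y ^ 2| = |I y| ^ 2 := by rw [sq_abs, abs_of_nonneg (sq_nonneg _)]
    rw [Real.norm_eq_abs, h1']
    have h2' : |I y| ^ 2 ≤ (C y * |t|) ^ 2 := by
      apply pow_le_pow_left₀ (abs_nonneg _) (hbound y)
    refine h2'.trans ?_
    have hCsq : (C y) ^ 2 = (max (M - y) 0) ^ (2 * d) *
        Real.exp (2 * (-lam * max (m - y) 0)) := by
      have h := sq_phi (a := max (M - y) 0) (b := -lam * max (m - y) 0)
        (le_max_right _ _) hd
      simpa [hCdef] using h
    have hkey : max (M - y) 0 ≤ (M - m) + max (m - y) 0 := by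
      apply max_le
      · have : M - y = (M - m) + (m - y) := by ring
        rw [this]
        exact add_le_add le_rfl (le_max_left _ _)
      · linarith [hmM, le_max_right (m - y) (0:ℝ)]
    have hexp : Real.exp (2 * (-lam * max (m - y) 0)) ≤
        Real.exp (2 * lam * (M - m)) * Real.exp (-(2 * lam) * max (M - y) 0) := by
      rw [← Real.exp_add]
      apply Real.exp_le_exp.2
      nlinarith [mul_le_mul_of_nonneg_left hkey hlam.le]
    calc (C y * |t|) ^ 2 = (C y) ^ 2 * t ^ 2 := by rw [mul_pow, sq_abs]
    _ = (max (M - y) 0) ^ (2 * d) * Real.exp (2 * (-lam * max (m - y) 0)) * t ^ 2 := by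
        rw [hCsq]
    _ ≤ (max (M - y) 0) ^ (2 * d) *
        (Real.exp (2 * lam * (M - m)) * Real.exp (-(2 * lam) * max (M - y) 0)) * t ^ 2 := by
        apply mul_le_mul_of_nonneg_right _ (sq_nonneg t)
        exact mul_le_mul_of_nonneg_left hexp (Real.rpow_nonneg (le_max_right _ _) _)
    _ = (Real.exp (2 * lam * (M - m)) * t ^ 2) *
        ((max (M - y) 0) ^ (2 * d) * Real.exp (-(2 * lam) * max (M - y) 0)) := by ring
  have h3 : MemLp I 2 (volume : Measure ℝ) := by
    rw [memLp_two_iff_integrable_sq hcontI.aestronglyMeasurable]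
    exact hIsq
  exact (h1.sub h2).add (h3.const_mul lam)
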